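/- For every ε > 0, the Aubin–Talenti function v_ε satisfies ∫_{ℝ³} v_ε(x)⁶ dx = 3^(3/2)·π²/4; in particular the integral is independent of ε. -/

import Mathlib

open Real MeasureTheory Filter Set Topology

lemma key_radial (a : ℝ) (ha : 0 < a) :
    ∫ y in Set.Ioi (0 : ℝ), y ^ 2 / (a ^ 2 + y ^ 2) ^ 3 = π / (16 * a ^ 3) := by
  have hg : ∀ y : ℝ, (0 : ℝ) < a ^ 2 + y ^ 2 := fun y => by positivity
  set F : ℝ → ℝ := fun y => -y / (4 * (a ^ 2 + y ^ 2) ^ 2)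
      + y / (8 * a ^ 2 * (a ^ 2 + y ^ 2)) + Real.arctan (y / a) / (8 * a ^ 3) with hF
  have hderiv : ∀ y : ℝ, HasDerivAt F (y ^ 2 / (a ^ 2 + y ^ 2) ^ 3) y := by
    intro y
    have h1 : HasDerivAt (fun y : ℝ => a ^ 2 + y ^ 2) (2 * y) y := by
      simpa using (hasDerivAt_pow 2 y).const_add (a ^ 2)
    have hA : HasDerivAt (fun y : ℝ => -y / (4 * (a ^ 2 + y ^ 2) ^ 2))
        (((-1) * (4 * (a ^ 2 + y ^ 2) ^ 2) - (-y) * (4 * (2 * (a ^ 2 + y ^ 2) ^ 1 * (2 * y)))) /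
          (4 * (a ^ 2 + y ^ 2) ^ 2) ^ 2) y := by
      exact (hasDerivAt_id y).neg.div ((h1.pow 2).const_mul 4) (by positivity)
    have hB : HasDerivAt (fun y : ℝ => y / (8 * a ^ 2 * (a ^ 2 + y ^ 2)))
        ((1 * (8 * a ^ 2 * (a ^ 2 + y ^ 2)) - y * (8 * a ^ 2 * (2 * y))) /
          (8 * a ^ 2 * (a ^ 2 + y ^ 2)) ^ 2) y :=
      (hasDerivAt_id y).div (h1.const_mul (8 * a ^ 2)) (by positivity)
    have hCarc : HasDerivAt (fun y : ℝ => Real.arctan (y / a))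
        (1 / (1 + (y / a) ^ 2) * (1 / a)) y := by
      have := (Real.hasDerivAt_arctan (y / a)).comp y ((hasDerivAt_id y).div_const a)
      exact this
    have hC := hCarc.div_const (8 * a ^ 3)
    have := (hA.add hB).add hC
    refine this.congr_deriv ?_
    have hya : 1 + (y / a) ^ 2 = (a ^ 2 + y ^ 2) / a ^ 2 := by
      field_simp
    rw [hya]
    have h2 := (hg y).ne'
    field_simp
    ring
  have hA0 : Tendsto (fun y : ℝ => y / (a ^ 2 + y ^ 2)) atTop (𝓝 0) := by
    have h1 : Tendsto (fun y : ℝ => a ^ 2 / y + y) atTop atTop :=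
      (tendsto_const_nhds.div_atTop tendsto_id).add_atTop tendsto_id
    have h2 := h1.inv_tendsto_atTop
    refine h2.congr' ?_
    filter_upwards [eventually_gt_atTop 0] with y hy
    rw [Pi.inv_apply, inv_eq_one_div]
    field_simp
  have hGinv : Tendsto (fun y : ℝ => (a ^ 2 + y ^ 2)⁻¹) atTop (𝓝 0) := by
    apply Tendsto.inv_tendsto_atTop
    exact tendsto_atTop_add_const_left _ _ (tendsto_pow_atTop two_ne_zero)
  have htend : Tendsto F atTop (𝓝 (π / (16 * a ^ 3))) := by
    have hA : Tendsto (fun y : ℝ => -y / (4 * (a ^ 2 + y ^ 2) ^ 2)) atTop (𝓝 0) := by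
      have := ((hA0.mul hGinv).const_mul (-(1:ℝ)/4))
      rw [mul_zero, mul_zero] at this
      refine this.congr fun y => ?_
      have := (hg y).ne'
      field_simp
    have hB : Tendsto (fun y : ℝ => y / (8 * a ^ 2 * (a ^ 2 + y ^ 2))) atTop (𝓝 0) := by
      have := hA0.const_mul (1 / (8 * a ^ 2))
      rw [mul_zero] at this
      refine this.congr fun y => ?_
      have := (hg y).ne'
      field_simp
    have hC : Tendsto (fun y : ℝ => Real.arctan (y / a) / (8 * a ^ 3)) atTop
        (𝓝 ((π / 2) / (8 * a ^ 3))) := by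
      refine Tendsto.div_const ?_ _
      exact (Real.tendsto_arctan_atTop.mono_right nhdsWithin_le_nhds).comp
        (tendsto_id.atTop_div_const ha)
    have := (hA.add hB).add hC
    rw [zero_add, zero_add] at this
    convert this using 2
    ring
  have := integral_Ioi_of_hasDerivAt_of_nonneg' (a := 0) (g := F)
    (g' := fun y => y ^ 2 / (a ^ 2 + y ^ 2) ^ 3) (fun x _ => hderiv x)
    (fun x _ => by positivity) htend
  rw [this, hF]
  simp [Real.arctan_zero]

lemma pow_six_eq (ε : ℝ) (hε : 0 < ε) (c : ℝ) (hc : 0 < c) :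
    ((3 : ℝ) ^ ((1:ℝ)/4) * ε ^ ((1:ℝ)/2) * c ^ (-(1:ℝ)/2)) ^ 6
      = 3 ^ ((3:ℝ)/2) * ε ^ 3 * (c ^ 3)⁻¹ := by
  rw [mul_pow, mul_pow,
    ← Real.rpow_natCast ((3:ℝ) ^ ((1:ℝ)/4)) 6, ← Real.rpow_natCast (ε ^ ((1:ℝ)/2)) 6,
    ← Real.rpow_natCast (c ^ (-(1:ℝ)/2)) 6,
    ← Real.rpow_mul (by norm_num : (0:ℝ) ≤ 3), ← Real.rpow_mul hε.le, ← Real.rpow_mul hc.le]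
  norm_num

theorem stmt_10 (ε : ℝ) (hε : 0 < ε)
    (v : EuclideanSpace ℝ (Fin 3) → ℝ)
    (hv : ∀ x : EuclideanSpace ℝ (Fin 3),
      v x = 3 ^ ((1 : ℝ) / 4) * ε ^ ((1 : ℝ) / 2) * (ε ^ 2 + ‖x‖ ^ 2) ^ (-(1 : ℝ) / 2)) :
    ∫ x : EuclideanSpace ℝ (Fin 3), (v x) ^ 6 = 3 ^ ((3 : ℝ) / 2) * π ^ 2 / 4 := by
  have hstep : ∫ x : EuclideanSpace ℝ (Fin 3), (v x) ^ 6
      = ∫ x : EuclideanSpace ℝ (Fin 3),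
        (fun r : ℝ => 3 ^ ((3:ℝ)/2) * ε ^ 3 * ((ε ^ 2 + r ^ 2) ^ 3)⁻¹) ‖x‖ := by
    congr 1
    funext x
    rw [hv x, pow_six_eq ε hε _ (by positivity)]
  rw [hstep, integral_fun_norm_addHaar volume
      (fun r : ℝ => 3 ^ ((3:ℝ)/2) * ε ^ 3 * ((ε ^ 2 + r ^ 2) ^ 3)⁻¹)]
  have hdim : Module.finrank ℝ (EuclideanSpace ℝ (Fin 3)) = 3 := by
    simp [finrank_euclideanSpace]
  rw [hdim]
  have hball : (volume (Metric.ball (0 : EuclideanSpace ℝ (Fin 3)) 1)).toReal = 4 * π / 3 := by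
    rw [EuclideanSpace.volume_ball]
    have hΓ : Real.Gamma ((Fintype.card (Fin 3) : ℝ)/2 + 1) = 3/4 * Real.sqrt π := by
      simp only [Fintype.card_fin]
      rw [show ((3:ℕ):ℝ)/2 = 1/2 + 1 + 0 by norm_num]
      rw [show (1:ℝ)/2 + 1 + 0 + 1 = (1/2 + 1) + 1 by ring,
        Real.Gamma_add_one (by norm_num), Real.Gamma_add_one (by norm_num),
        Real.Gamma_one_half_eq]
      ring
    rw [hΓ]
    simp only [Fintype.card_fin, ENNReal.ofReal_one, one_pow, one_mul]
    rw [ENNReal.toReal_ofReal (by positivity)]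
    rw [show Real.sqrt π ^ 3 = π * Real.sqrt π by
      rw [pow_succ, sq_sqrt pi_pos.le]]
    have hs : Real.sqrt π ≠ 0 := by positivity
    field_simp
  rw [measureReal_def, hball]
  have hpt : ∀ y : ℝ, y ^ (3-1) • ((3:ℝ) ^ ((3:ℝ)/2) * ε ^ 3 * ((ε ^ 2 + y ^ 2) ^ 3)⁻¹)
      = (3 ^ ((3:ℝ)/2) * ε ^ 3) * (y ^ 2 / (ε ^ 2 + y ^ 2) ^ 3) := fun y => by
    simp only [smul_eq_mul]
    ring
  simp_rw [hpt]
  rw [integral_const_mul, key_radial ε hε]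
  simp only [nsmul_eq_mul, smul_eq_mul, Nat.cast_ofNat]
  field_simp
  ring
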